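/- arXiv:2412.19444 — 2 statements merged into one kernel-verified Lean document; each statement's English description precedes it below -/
import Mathlib

section
/- Suppose 0 < a_0 ≤ a_1 ≤ ... ≤ a_T. Then max over t ≤ T of ∑_{τ<t} a_τ/a_t is at least (1/e)·(T / log₊(a_T/a_0) − 1), where log₊(x) = max(1, log x). -/
open Finset

private lemma auxA (Tr lam logM M L : ℝ) (h1 : (Tr-1)*lam - logM ≤ L)
    (h2 : 1 ≤ lam*(M+1)) (h3 : logM ≤ M-1) (h4 : 1 ≤ Tr) (h5 : 0 < M) :
    Tr - M^2 ≤ L*(M+1) := by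
  nlinarith [mul_le_mul_of_nonneg_right h1 (by linarith : (0:ℝ) ≤ M+1),
    mul_nonneg (by linarith : (0:ℝ) ≤ Tr - 1) (by linarith : (0:ℝ) ≤ lam*(M+1) - 1),
    mul_le_mul_of_nonneg_right h3 (by linarith : (0:ℝ) ≤ M+1)]

private lemma auxB (Tr mR lam M L : ℝ) (h1 : (Tr-mR)*lam ≤ L)
    (h2 : 1 ≤ lam*(M+1)) (h4 : 0 ≤ Tr - mR) (h5 : 0 < M) :
    Tr - mR ≤ L*(M+1) := by
  nlinarith [mul_le_mul_of_nonneg_right h1 (by linarith : (0:ℝ) ≤ M+1),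
    mul_nonneg h4 (by linarith : (0:ℝ) ≤ lam*(M+1) - 1)]

private lemma aux1 (Tr M L E : ℝ) (hM : 0 < M) (hM32 : M ≤ 3/2) (hE : 2.7 ≤ E)
    (hT : E*M+1 ≤ Tr) (hL : Tr - M^2 ≤ L*(M+1)) : Tr ≤ L*(E*M+1) := by
  have hEM : (0:ℝ) ≤ E*M+1 := by nlinarith
  have h2a := mul_le_mul_of_nonneg_right hT (mul_nonneg hM.le (by linarith : (0:ℝ) ≤ E-1))
  have h2b : (0:ℝ) ≤ M*(E*M+1)*(E-1-M) :=
    mul_nonneg (mul_nonneg hM.le hEM) (by linarith)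
  have h1' := mul_le_mul_of_nonneg_right hL hEM
  have hfin : Tr*(M+1) ≤ (L*(E*M+1))*(M+1) := by nlinarith [h2a, h2b, h1']
  exact le_of_mul_le_mul_right hfin (by linarith)

private lemma aux2 (Tr M mR L E : ℝ) (hM : 3/2 ≤ M) (hE : 2.71 ≤ E)
    (hm : mR ≤ M+1) (hT : E*M+1 ≤ Tr) (hL : Tr - mR ≤ L*(M+1)) : Tr ≤ L*(E*M+1) := by
  have hM0 : (0:ℝ) < M := by linarith
  have hEM : (0:ℝ) ≤ E*M+1 := by nlinarith
  have h2a := mul_le_mul_of_nonneg_right hT (mul_nonneg hM0.le (by linarith : (0:ℝ) ≤ E-1))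
  have h2c : (0:ℝ) ≤ (E-2)*M - 1 := by
    nlinarith [mul_nonneg (by linarith : (0:ℝ) ≤ E - 2.71) (by linarith : (0:ℝ) ≤ M - 3/2)]
  have h2b : (0:ℝ) ≤ (E*M+1)*((E-2)*M - 1) := mul_nonneg hEM h2c
  have h1' := mul_le_mul_of_nonneg_right hL hEM
  have hmm := mul_le_mul_of_nonneg_right hm hEM
  have hfin : Tr*(M+1) ≤ (L*(E*M+1))*(M+1) := by nlinarith [h2a, h2b, h1', hmm]
  exact le_of_mul_le_mul_right hfin (by linarith)


set_option maxHeartbeats 1000000 in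
theorem stmt_3 (T : ℕ) (a : ℕ → ℝ) (hpos : 0 < a 0)
    (hmono : ∀ k, 1 ≤ k → k ≤ T → a (k - 1) ≤ a k) :
    ∃ t ≤ T,
      (1 / Real.exp 1) * ((T : ℝ) / max 1 (Real.log (a T / a 0)) - 1)
        ≤ ∑ τ ∈ Finset.range t, a τ / a t := by
  have hE : (2.7182818283 : ℝ) < Real.exp 1 := Real.exp_one_gt_d9
  have hE0 : (0:ℝ) < Real.exp 1 := Real.exp_pos 1
  have hE27 : (2.7:ℝ) ≤ Real.exp 1 := by norm_num at hE ⊢; linarith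
  have hE271 : (2.71:ℝ) ≤ Real.exp 1 := by norm_num at hE ⊢; linarith
  rcases Nat.eq_zero_or_pos T with hT0 | hT1
  · subst hT0
    refine ⟨0, le_refl 0, ?_⟩
    simp only [Nat.cast_zero, Finset.range_zero, Finset.sum_empty]
    have h1 : max 1 (Real.log (a 0 / a 0)) = 1 := by
      rw [div_self hpos.ne', Real.log_one]; simp
    rw [h1, zero_div]
    have h2 : (1 / Real.exp 1) * ((0:ℝ) - 1) < 0 := by
      apply mul_neg_of_pos_of_neg
      · positivity
      · norm_num
    linarith
  · have ham : ∀ i j, i ≤ j → j ≤ T → a i ≤ a j := by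
      intro i j hij hjT
      induction j, hij using Nat.le_induction with
      | base => exact le_refl _
      | succ n hn ih =>
        refine le_trans (ih (by omega)) ?_
        have := hmono (n+1) (by omega) hjT
        simpa using this
    have apos : ∀ k, k ≤ T → 0 < a k := fun k hk =>
      lt_of_lt_of_le hpos (ham 0 k (Nat.zero_le _) hk)
    obtain ⟨t0, ht0mem, ht0max⟩ :=
      Finset.exists_max_image (Finset.Icc 1 T)
        (fun t => ∑ τ ∈ Finset.range t, a τ / a t) ⟨1, Finset.mem_Icc.mpr ⟨le_rfl, hT1⟩⟩
    obtain ⟨ht01, ht0T⟩ := Finset.mem_Icc.mp ht0mem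
    obtain ⟨M, hMdef⟩ : ∃ x : ℝ, x = ∑ τ ∈ Finset.range t0, a τ / a t0 := ⟨_, rfl⟩
    have hMub : ∀ t, 1 ≤ t → t ≤ T → (∑ τ ∈ Finset.range t, a τ / a t) ≤ M :=
      fun t h1 h2 => hMdef ▸ ht0max t (Finset.mem_Icc.mpr ⟨h1, h2⟩)
    have hM1 : a 0 / a 1 ≤ M := by
      have := hMub 1 le_rfl hT1
      simpa using this
    have hMpos : 0 < M :=
      lt_of_lt_of_le (div_pos hpos (apos 1 hT1)) hM1
    obtain ⟨A, hAdef⟩ : ∃ A : ℕ → ℝ, ∀ t, A t = ∑ τ ∈ Finset.range t, a τ :=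
      ⟨_, fun _ => rfl⟩
    have key : ∀ t, 1 ≤ t → t ≤ T → A t ≤ M * a t := by
      intro t h1 h2
      have h := hMub t h1 h2
      have hat : 0 < a t := apos t h2
      rw [← Finset.sum_div, div_le_iff₀ hat] at h
      rw [hAdef]
      linarith
    have hq1 : (0:ℝ) < 1 + 1/M := by positivity
    have hstep : ∀ t, 1 ≤ t → t ≤ T → A t * (1 + 1/M) ≤ A (t+1) := by
      intro t h1 h2
      have h := key t h1 h2
      have hA1 : A (t+1) = A t + a t := by
        rw [hAdef, hAdef, Finset.sum_range_succ]
      have hat : A t / M ≤ a t := (div_le_iff₀ hMpos).mpr (by linarith)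
      have hexp : A t * (1 + 1/M) = A t + A t / M := by field_simp
      rw [hexp, hA1]
      linarith
    have hgeom : ∀ m j, 1 ≤ m → m + j ≤ T → A m * (1 + 1/M)^j ≤ A (m + j) := by
      intro m j hm
      induction j with
      | zero => intro _; simp
      | succ j ih =>
        intro hj
        have hij := ih (by omega)
        calc A m * (1 + 1/M)^(j+1) = (A m * (1 + 1/M)^j) * (1 + 1/M) := by ring
          _ ≤ A (m+j) * (1 + 1/M) := mul_le_mul_of_nonneg_right hij hq1.le
          _ ≤ A (m+j+1) := hstep (m+j) (by omega) (by omega)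
    have hlam : 1 / (M + 1) ≤ Real.log (1 + 1/M) := by
      have h := Real.one_sub_inv_le_log_of_pos hq1
      have hval : 1 - (1 + 1/M)⁻¹ = 1/(M+1) := by
        rw [inv_eq_one_div]
        field_simp
        ring
      linarith [h, hval.symm.le, hval.le]
    have hlamM : 1 ≤ Real.log (1 + 1/M) * (M + 1) := by
      have hM1p : (0:ℝ) < M + 1 := by positivity
      rw [div_le_iff₀ hM1p] at hlam
      linarith
    have hlogM : Real.log M ≤ M - 1 := Real.log_le_sub_one_of_pos hMpos
    refine ⟨t0, ht0T, ?_⟩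
    rw [← hMdef]
    have hsuff : (T:ℝ) ≤ (max 1 (Real.log (a T / a 0))) * (Real.exp 1 * M + 1) →
        (1 / Real.exp 1) * ((T : ℝ) / max 1 (Real.log (a T / a 0)) - 1) ≤ M := by
      intro h
      set L := max 1 (Real.log (a T / a 0)) with hLdef
      have hL0 : (0:ℝ) < L := lt_of_lt_of_le one_pos (le_max_left _ _)
      have h2 : (T:ℝ)/L ≤ Real.exp 1 * M + 1 :=
        (div_le_iff₀ hL0).mpr (by rw [mul_comm]; exact h)
      have h3 : (T:ℝ)/L - 1 ≤ Real.exp 1 * M := by linarith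
      calc (1 / Real.exp 1) * ((T:ℝ)/L - 1)
          ≤ (1/Real.exp 1) * (Real.exp 1 * M) := by
            apply mul_le_mul_of_nonneg_left h3 (by positivity)
        _ = M := by field_simp
    apply hsuff
    set lam := Real.log (1 + 1/M) with hlamdef
    set L := max 1 (Real.log (a T / a 0)) with hLdef
    have hL1 : (1:ℝ) ≤ L := le_max_left _ _
    have hLell : Real.log (a T / a 0) ≤ L := le_max_right _ _
    by_cases hTc : (T:ℝ) ≤ Real.exp 1 * M + 1
    · have hEM : (0:ℝ) ≤ Real.exp 1 * M + 1 := by positivity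
      nlinarith [mul_le_mul_of_nonneg_right hL1 hEM]
    · push_neg at hTc
      by_cases hMc : M ≤ 3/2
      -- Route 1 : m = 1
      · have hg := hgeom 1 (T-1) le_rfl (by omega)
        have hT1' : 1 + (T-1) = T := by omega
        rw [hT1'] at hg
        have hA1 : A 1 = a 0 := by rw [hAdef]; simp
        rw [hA1] at hg
        have hAT : A T ≤ M * a T := key T hT1 le_rfl
        have haT : a 0 * (1+1/M)^(T-1) / M ≤ a T := by
          rw [div_le_iff₀ hMpos]
          calc a 0 * (1+1/M)^(T-1) ≤ A T := hg
            _ ≤ M * a T := hAT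
            _ = a T * M := mul_comm _ _
        have hrat : (1+1/M)^(T-1) / M ≤ a T / a 0 := by
          rw [le_div_iff₀ hpos]
          calc (1+1/M)^(T-1)/M * a 0 = a 0 * (1+1/M)^(T-1) / M := by ring
            _ ≤ a T := haT
        have hXpos : (0:ℝ) < (1+1/M)^(T-1) / M := by positivity
        have hlog := Real.log_le_log hXpos hrat
        have hexpand : Real.log ((1+1/M)^(T-1) / M)
            = ((T-1 : ℕ):ℝ) * lam - Real.log M := by
          rw [Real.log_div (by positivity) hMpos.ne', Real.log_pow, hlamdef]
        have hncast : ((T-1 : ℕ):ℝ) = (T:ℝ) - 1 := by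
          have h1 : (1:ℕ) ≤ T := hT1
          push_cast [Nat.cast_sub h1]
          ring
        rw [hexpand, hncast] at hlog
        -- hlog : (T-1)*lam - log M ≤ log (a T / a 0) ≤ L
        have hLlb : ((T:ℝ) - 1) * lam - Real.log M ≤ L := le_trans hlog hLell
        have hTr1 : (1:ℝ) ≤ (T:ℝ) := by exact_mod_cast hT1
        have hs1 : (T:ℝ) - M^2 ≤ L*(M+1) := auxA ((T:ℕ):ℝ) lam (Real.log M) M L hLlb hlamM hlogM hTr1 hMpos
        exact aux1 ((T:ℕ):ℝ) M L (Real.exp 1) hMpos hMc hE27 hTc.le hs1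
      -- Route 2 : m = ⌊M⌋ + 1
      · push_neg at hMc
        obtain ⟨m, hmdef⟩ : ∃ m : ℕ, m = Nat.floor M + 1 := ⟨_, rfl⟩
        have hm1 : M ≤ (m:ℝ) := by
          rw [hmdef]
          have := Nat.lt_floor_add_one M
          push_cast
          linarith
        have hm2 : (m:ℝ) ≤ M + 1 := by
          rw [hmdef]
          have := Nat.floor_le hMpos.le
          push_cast
          linarith
        have hmT : m ≤ T := by
          have hEM1 : (0:ℝ) ≤ (Real.exp 1 - 1)*M := mul_nonneg (by linarith) hMpos.le
          have hcast : (m:ℝ) < (T:ℝ) := by nlinarith [hEM1, hm2, hTc]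
          exact_mod_cast hcast.le
        have hm0 : 1 ≤ m := by omega
        have hAm : (m:ℝ) * a 0 ≤ A m := by
          have hterm : ∀ τ ∈ Finset.range m, a 0 ≤ a τ := by
            intro τ hτ
            exact ham 0 τ (Nat.zero_le _)
              (le_trans (Nat.le_of_lt_succ (Nat.lt_succ_of_lt (Finset.mem_range.mp hτ))) hmT)
          calc (m:ℝ) * a 0 = ∑ _τ ∈ Finset.range m, a 0 := by
                simp [Finset.sum_const, mul_comm]
            _ ≤ A m := by rw [hAdef]; exact Finset.sum_le_sum hterm
        have hg := hgeom m (T-m) hm0 (by omega)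
        have hmT' : m + (T-m) = T := by omega
        rw [hmT'] at hg
        have hAT : A T ≤ M * a T := key T hT1 le_rfl
        have hqk : (0:ℝ) ≤ (1+1/M)^(T-m) := by positivity
        have haT : a 0 * (1+1/M)^(T-m) ≤ a T := by
          have h1 : M * (a 0 * (1+1/M)^(T-m)) ≤ M * a T := by
            calc M * (a 0 * (1+1/M)^(T-m)) = (M * a 0) * (1+1/M)^(T-m) := by ring
              _ ≤ ((m:ℝ) * a 0) * (1+1/M)^(T-m) :=
                  mul_le_mul_of_nonneg_right (mul_le_mul_of_nonneg_right hm1 hpos.le) hqk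
              _ ≤ A m * (1+1/M)^(T-m) := mul_le_mul_of_nonneg_right hAm hqk
              _ ≤ A T := hg
              _ ≤ M * a T := hAT
          exact le_of_mul_le_mul_left h1 hMpos
        have hrat : (1+1/M)^(T-m) ≤ a T / a 0 := by
          rw [le_div_iff₀ hpos]
          calc (1+1/M)^(T-m) * a 0 = a 0 * (1+1/M)^(T-m) := by ring
            _ ≤ a T := haT
        have hXpos : (0:ℝ) < (1+1/M)^(T-m) := by positivity
        have hlog := Real.log_le_log hXpos hrat
        rw [Real.log_pow] at hlog
        have hkcast : ((T-m : ℕ):ℝ) = (T:ℝ) - (m:ℝ) := by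
          push_cast [Nat.cast_sub hmT]
          ring
        rw [hkcast] at hlog
        have hLlb : ((T:ℝ) - (m:ℝ)) * lam ≤ L := le_trans hlog hLell
        have hEM1 : (0:ℝ) ≤ (Real.exp 1 - 1)*M := mul_nonneg (by linarith) hMpos.le
        clear hmono ham apos hMub hM1 key hstep hgeom hsuff ht0max hmdef hm1 hmT hmT' hm0
        clear hAm hg hAT hqk haT hrat hXpos hlog hkcast hq1 hlam hMdef hAdef
        have hTm0 : (0:ℝ) ≤ (T:ℝ) - (m:ℝ) := by linarith [hEM1, hm2, hTc.le]
        have hs1 : (T:ℝ) - (m:ℝ) ≤ L*(M+1) := auxB ((T:ℕ):ℝ) ((m:ℕ):ℝ) lam M L hLlb hlamM hTm0 hMpos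
        exact aux2 ((T:ℕ):ℝ) M ((m:ℕ):ℝ) L (Real.exp 1) hMc.le hE271 hm2 hTc.le hs1
end

section
/- For β₁ ∈ (0,1), nonnegative reals g_0,...,g_{t-1} with positive partial sums of squares, the double sum ∑_{k=0}^{t-1} (∑_{j=0}^k β₁^{k-j} g_j²)/√(∑_{s=0}^k g_s²) is at most (2/(1−β₁)) · √(∑_{s=0}^{t-1} g_s²). -/
open Finset

private lemma lemA (t : ℕ) (g : ℕ → ℝ)
    (hpos : ∀ k < t, 0 < ∑ s ∈ Finset.range (k + 1), (g s) ^ 2) :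
    ∑ j ∈ Finset.range t, (g j) ^ 2 / Real.sqrt (∑ s ∈ Finset.range (j + 1), (g s) ^ 2)
      ≤ 2 * Real.sqrt (∑ s ∈ Finset.range t, (g s) ^ 2) := by
  induction t with
  | zero => simp
  | succ n ih =>
    have ih' := ih (fun k hk => hpos k (Nat.lt_succ_of_lt hk))
    rw [Finset.sum_range_succ]
    set A : ℝ := ∑ s ∈ Finset.range n, (g s) ^ 2 with hA
    have hAnn : 0 ≤ A := Finset.sum_nonneg fun i _ => sq_nonneg _
    have hB : 0 < ∑ s ∈ Finset.range (n + 1), (g s) ^ 2 := hpos n (Nat.lt_succ_self n)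
    set B : ℝ := ∑ s ∈ Finset.range (n + 1), (g s) ^ 2 with hBdef
    have hBA : B = A + g n ^ 2 := by rw [hBdef, Finset.sum_range_succ, hA]
    set a := Real.sqrt A with ha
    set b := Real.sqrt B with hb
    have ha2 : a ^ 2 = A := Real.sq_sqrt hAnn
    have hb2 : b ^ 2 = B := Real.sq_sqrt hB.le
    have hbpos : 0 < b := Real.sqrt_pos.mpr hB
    have hann : 0 ≤ a := Real.sqrt_nonneg _
    have key : g n ^ 2 / b ≤ 2 * b - 2 * a := by
      rw [div_le_iff₀ hbpos]
      nlinarith [sq_nonneg (b - a)]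
    linarith
private lemma geom_bound (β₁ : ℝ) (hβ₁ : 0 < β₁) (hβ₁' : β₁ < 1) (n : ℕ) :
    ∑ i ∈ Finset.range n, β₁ ^ i ≤ 1 / (1 - β₁) := by
  rw [geom_sum_eq (ne_of_lt hβ₁') n]
  have h1 : 0 < 1 - β₁ := by linarith
  have heq : (β₁ ^ n - 1) / (β₁ - 1) = (1 - β₁ ^ n) / (1 - β₁) := by
    rw [div_eq_div_iff (by linarith) (by linarith)]; ring
  rw [heq, div_le_div_iff₀ h1 h1]
  nlinarith [pow_nonneg hβ₁.le n]

theorem stmt_7 (β₁ : ℝ) (hβ₁ : 0 < β₁) (hβ₁' : β₁ < 1) (t : ℕ) (g : ℕ → ℝ)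
    (hnn : ∀ k < t, 0 ≤ g k)
    (hpos : ∀ k < t, 0 < ∑ s ∈ Finset.range (k + 1), (g s) ^ 2) :
    ∑ k ∈ Finset.range t,
        (∑ j ∈ Finset.range (k + 1), β₁ ^ (k - j) * (g j) ^ 2) /
          Real.sqrt (∑ s ∈ Finset.range (k + 1), (g s) ^ 2)
      ≤ (2 / (1 - β₁)) * Real.sqrt (∑ s ∈ Finset.range t, (g s) ^ 2) := by
  have h1β : 0 < 1 - β₁ := by linarith
  set S : ℕ → ℝ := fun k => ∑ s ∈ Finset.range (k + 1), (g s) ^ 2 with hS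
  have hSmono : ∀ j k : ℕ, j ≤ k → S j ≤ S k := by
    intro j k hjk
    apply Finset.sum_le_sum_of_subset_of_nonneg
    · exact Finset.range_subset_range.mpr (by omega)
    · intro i _ _; exact sq_nonneg _
  -- Step 1: replace S k by S j in the denominator
  have step1 : ∑ k ∈ Finset.range t,
      (∑ j ∈ Finset.range (k + 1), β₁ ^ (k - j) * (g j) ^ 2) / Real.sqrt (S k)
      ≤ ∑ k ∈ Finset.range t,
      ∑ j ∈ Finset.range (k + 1), β₁ ^ (k - j) * ((g j) ^ 2 / Real.sqrt (S j)) := by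
    apply Finset.sum_le_sum
    intro k hk
    rw [Finset.sum_div]
    apply Finset.sum_le_sum
    intro j hj
    rw [Finset.mem_range] at hj hk
    have hSj : 0 < S j := hpos j (by omega)
    have hsqj : 0 < Real.sqrt (S j) := Real.sqrt_pos.mpr hSj
    have hsqle : Real.sqrt (S j) ≤ Real.sqrt (S k) :=
      Real.sqrt_le_sqrt (hSmono j k (by omega))
    rw [mul_div_assoc]
    apply mul_le_mul_of_nonneg_left _ (pow_nonneg hβ₁.le _)
    apply div_le_div_of_nonneg_left (sq_nonneg _) hsqj hsqle
  -- Step 2: exchange the order of summation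
  have step2 : ∑ k ∈ Finset.range t,
      ∑ j ∈ Finset.range (k + 1), β₁ ^ (k - j) * ((g j) ^ 2 / Real.sqrt (S j))
      = ∑ j ∈ Finset.range t,
        ∑ k ∈ Finset.Ico j t, β₁ ^ (k - j) * ((g j) ^ 2 / Real.sqrt (S j)) := by
    have := Finset.sum_Ico_Ico_comm 0 t
      (fun j k => β₁ ^ (k - j) * ((g j) ^ 2 / Real.sqrt (S j)))
    simp only [Nat.Ico_zero_eq_range] at this
    rw [← this]
  -- Step 3: bound the inner geometric sums
  have step3 : ∑ j ∈ Finset.range t,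
      ∑ k ∈ Finset.Ico j t, β₁ ^ (k - j) * ((g j) ^ 2 / Real.sqrt (S j))
      ≤ ∑ j ∈ Finset.range t, (1 / (1 - β₁)) * ((g j) ^ 2 / Real.sqrt (S j)) := by
    apply Finset.sum_le_sum
    intro j hj
    rw [Finset.mem_range] at hj
    have hrec : ∑ k ∈ Finset.Ico j t, β₁ ^ (k - j) * ((g j) ^ 2 / Real.sqrt (S j))
        = (∑ i ∈ Finset.range (t - j), β₁ ^ i) * ((g j) ^ 2 / Real.sqrt (S j)) := by
      rw [Finset.sum_mul, Finset.sum_Ico_eq_sum_range]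
      apply Finset.sum_congr rfl
      intro i _
      have h : j + i - j = i := by omega
      rw [h]
    rw [hrec]
    have hnn' : 0 ≤ (g j) ^ 2 / Real.sqrt (S j) :=
      div_nonneg (sq_nonneg _) (Real.sqrt_nonneg _)
    exact mul_le_mul_of_nonneg_right (geom_bound β₁ hβ₁ hβ₁' _) hnn'
  have step4 : ∑ j ∈ Finset.range t, (1 / (1 - β₁)) * ((g j) ^ 2 / Real.sqrt (S j))
      ≤ (2 / (1 - β₁)) * Real.sqrt (∑ s ∈ Finset.range t, (g s) ^ 2) := by
    rw [← Finset.mul_sum]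
    have := lemA t g hpos
    calc (1 / (1 - β₁)) * ∑ j ∈ Finset.range t, (g j) ^ 2 / Real.sqrt (S j)
        ≤ (1 / (1 - β₁)) * (2 * Real.sqrt (∑ s ∈ Finset.range t, (g s) ^ 2)) := by
          apply mul_le_mul_of_nonneg_left this (by positivity)
      _ = (2 / (1 - β₁)) * Real.sqrt (∑ s ∈ Finset.range t, (g s) ^ 2) := by ring
  exact le_trans step1 (le_trans (le_of_eq step2) (le_trans step3 step4))
end
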